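/- Suppose r : ℕ → ℝ≥0 satisfies Σ_{k≤N} r(k) = A·N·log N + O(N) for a constant A > 0. Then as h → 0⁺, Σ_{k ≤ 1/h} r(k)/k³ · sin²(πhk) = (A π²/2)·h²·log²(1/h) + O(h² log(1/h)). -/

import Mathlib

set_option maxHeartbeats 1000000

open Real Filter

lemma tele13 (f : ℕ → ℝ) (N : ℕ) :
    ∑ m ∈ Finset.Icc 1 N, (f (m+1) - f m) = f (N+1) - f 1 := by
  induction N with
  | zero => simp
  | succ n ih =>
    rw [Finset.sum_Icc_succ_top (by omega), ih]; ring

lemma tele13' (f : ℕ → ℝ) (N : ℕ) (hN : 1 ≤ N) :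
    ∑ m ∈ Finset.Icc 2 N, (f m - f (m-1)) = f N - f 1 := by
  induction N, hN using Nat.le_induction with
  | base => simp
  | succ n hn ih =>
    rw [Finset.sum_Icc_succ_top (by omega), ih]
    simp

lemma log_diff_lb13 (m : ℕ) (hm : 1 ≤ m) :
    1 / ((m:ℝ)+1) ≤ Real.log (m+1) - Real.log m := by
  have hm' : (0:ℝ) < m := by exact_mod_cast hm
  have h1 : (0:ℝ) < (m:ℝ)+1 := by linarith
  rw [← Real.log_div (by positivity) (by positivity)]
  have := Real.one_sub_inv_le_log_of_pos (x := ((m:ℝ)+1)/m) (by positivity)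
  have h2 : 1 - (((m:ℝ)+1)/m)⁻¹ = 1/((m:ℝ)+1) := by
    rw [inv_div]; field_simp; ring
  linarith [h2 ▸ this]

lemma log_diff_ub13 (m : ℕ) (hm : 1 ≤ m) :
    Real.log (m+1) - Real.log m ≤ 1 / m := by
  have hm' : (0:ℝ) < m := by exact_mod_cast hm
  rw [← Real.log_div (by positivity) (by positivity)]
  have := Real.log_le_sub_one_of_pos (x := ((m:ℝ)+1)/m) (by positivity)
  have h2 : ((m:ℝ)+1)/m - 1 = 1/m := by field_simp; ring
  linarith [h2 ▸ this]

-- upper per-term: log m/(m+1) ≤ (log(m+1)^2 - log m^2)/2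
lemma ubterm13 (m : ℕ) (hm : 1 ≤ m) :
    Real.log m / ((m:ℝ)+1) ≤ ((Real.log (m+1))^2 - (Real.log m)^2)/2 := by
  have hm' : (1:ℝ) ≤ m := by exact_mod_cast hm
  have hl : 0 ≤ Real.log m := Real.log_nonneg hm'
  have hδ := log_diff_lb13 m hm
  have hmono : Real.log m ≤ Real.log (m+1) :=
    Real.log_le_log (by linarith) (by linarith)
  have h1 : Real.log m / ((m:ℝ)+1) = Real.log m * (1/((m:ℝ)+1)) := by ring
  rw [h1]
  have : Real.log m * (1/((m:ℝ)+1)) ≤ Real.log m * (Real.log (m+1) - Real.log m) :=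
    mul_le_mul_of_nonneg_left hδ hl
  nlinarith
lemma lbterm13 (m : ℕ) (hm : 2 ≤ m) :
    ((Real.log m)^2/2 - 4*Real.log m) - ((Real.log (m-1))^2/2 - 4*Real.log (m-1))
      ≤ Real.log m / ((m:ℝ)+1) := by
  have hM : (2:ℝ) ≤ m := by exact_mod_cast hm
  set M := (m:ℝ)
  set b := Real.log m with hbdef
  set a := Real.log (M - 1) with hadef
  have hcast : ((m - 1 : ℕ) : ℝ) = M - 1 := by
    push_cast [Nat.cast_sub (by omega : 1 ≤ m)]; ring
  have hd0 := log_diff_ub13 (m-1) (by omega)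
  rw [hcast] at hd0
  have hd : b - a ≤ 1/(M-1) := by
    have : M - 1 + 1 = M := by ring
    rw [this] at hd0; exact hd0
  have ha : 0 ≤ a := Real.log_nonneg (by linarith)
  have hab : a ≤ b := Real.log_le_log (by linarith) (by linarith)
  have hbM : b ≤ M - 1 := Real.log_le_sub_one_of_pos (by linarith)
  have h1 : (b-a)*(M-1) ≤ 1 := by
    have := mul_le_mul_of_nonneg_right hd (by linarith : (0:ℝ) ≤ M - 1)
    rw [div_mul_cancel₀] at this; · linarith
    · linarith
  have hbnn : 0 ≤ b := Real.log_nonneg (by linarith)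
  have step1 : (b^2 - a^2)/2 ≤ b*(b-a) := by nlinarith [sq_nonneg (b-a)]
  have step2 : b*(b-a)*(M-1) ≤ b := by nlinarith [mul_nonneg hbnn (sub_nonneg.2 hab)]
  have key : ((b^2 - a^2)/2 - 4*(b-a)) * (M+1) ≤ b := by
    nlinarith [mul_le_mul_of_nonneg_right step1 (by linarith : (0:ℝ) ≤ M+1),
      mul_nonneg hbnn (sub_nonneg.2 hab),
      mul_le_mul_of_nonneg_right (sub_nonneg.2 hab) (by linarith : (0:ℝ) ≤ M+1)]
  have main : (b^2 - a^2)/2 - 4*(b-a) ≤ b/(M+1) :=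
    (le_div_iff₀ (by linarith : (0:ℝ) < M + 1)).2 key
  linarith [main]

lemma L1_13 (N : ℕ) (hN : 1 ≤ N) :
    (Real.log N)^2/2 - 4*Real.log N ≤ ∑ m ∈ Finset.Icc 1 N, Real.log m/((m:ℝ)+1) ∧
    ∑ m ∈ Finset.Icc 1 N, Real.log m/((m:ℝ)+1) ≤ (Real.log N)^2/2 + Real.log N + 1/2 := by
  constructor
  · -- lower bound
    have hsplit : Finset.Icc 1 N = insert 1 (Finset.Icc 2 N) := by
      ext x; simp [Finset.mem_Icc, Finset.mem_insert]; omega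
    rw [hsplit, Finset.sum_insert (by simp)]
    simp only [Nat.cast_one, Real.log_one, zero_div, zero_add]
    set g : ℕ → ℝ := fun n => (Real.log n)^2/2 - 4*Real.log n with hg
    rcases Nat.lt_or_ge N 2 with h2 | h2
    · interval_cases N
      simp [g]
    · have htele := tele13' g N (by omega)
      have hsum : ∑ m ∈ Finset.Icc 2 N, (g m - g (m-1)) ≤
          ∑ m ∈ Finset.Icc 2 N, Real.log m/((m:ℝ)+1) := by
        apply Finset.sum_le_sum
        intro m hmm
        rw [Finset.mem_Icc] at hmm
        have hcast : ((m - 1 : ℕ) : ℝ) = (m:ℝ) - 1 := by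
          push_cast [Nat.cast_sub (by omega : 1 ≤ m)]; ring
        have := lbterm13 m hmm.1
        simp only [hg]
        rw [hcast]
        exact this
      rw [htele] at hsum
      simp only [hg, Nat.cast_one, Real.log_one] at hsum
      norm_num at hsum
      linarith
  · -- upper bound
    set f : ℕ → ℝ := fun n => (Real.log n)^2/2 with hf
    have hsum : ∑ m ∈ Finset.Icc 1 N, Real.log m/((m:ℝ)+1) ≤
        ∑ m ∈ Finset.Icc 1 N, (f (m+1) - f m) := by
      apply Finset.sum_le_sum
      intro m hmm
      rw [Finset.mem_Icc] at hmm
      have := ubterm13 m hmm.1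
      simp only [hf]
      push_cast
      linarith
    rw [tele13] at hsum
    simp only [hf, Nat.cast_one, Real.log_one] at hsum
    norm_num at hsum
    -- log(N+1) ≤ log N + 1
    have h1 : Real.log (N+1) ≤ Real.log N + 1 := by
      have := log_diff_ub13 N hN
      have hN' : (1:ℝ) ≤ N := by exact_mod_cast hN
      have : (1:ℝ)/N ≤ 1 := by
        rw [div_le_one (by linarith)]; linarith
      linarith [log_diff_ub13 N hN]
    have h0 : 0 ≤ Real.log ((N:ℝ)+1) := Real.log_nonneg (by
      have : (1:ℝ) ≤ N := by exact_mod_cast hN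
      linarith)
    push_cast at hsum
    nlinarith [hsum, h1, h0]
lemma abel13 (r : ℕ → ℝ) (N : ℕ) :
    ∑ k ∈ Finset.Icc 1 N, r k / k =
      (∑ m ∈ Finset.Icc 1 N, (∑ k ∈ Finset.Icc 1 m, r k) * (1/(m:ℝ) - 1/((m:ℝ)+1)))
      + (∑ k ∈ Finset.Icc 1 N, r k)/((N:ℝ)+1) := by
  induction N with
  | zero => simp
  | succ n ih =>
    have hS : ∑ k ∈ Finset.Icc 1 (n+1), r k = (∑ k ∈ Finset.Icc 1 n, r k) + r (n+1) :=
      Finset.sum_Icc_succ_top (by omega) _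
    rw [Finset.sum_Icc_succ_top (by omega : 1 ≤ n+1) (fun k => r k / (k:ℝ)),
        Finset.sum_Icc_succ_top (by omega : 1 ≤ n+1)
          (fun m => (∑ k ∈ Finset.Icc 1 m, r k) * (1/(m:ℝ) - 1/((m:ℝ)+1))),
        hS, ih]
    set B := ∑ k ∈ Finset.Icc 1 n, r k
    set T := ∑ m ∈ Finset.Icc 1 n, (∑ k ∈ Finset.Icc 1 m, r k) * (1/(m:ℝ) - 1/((m:ℝ)+1))
    have h1 : ((n:ℝ)+1) ≠ 0 := by positivity
    have h2 : ((n:ℝ)+1+1) ≠ 0 := by positivity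
    push_cast
    field_simp
    ring
lemma harmonic13 (N : ℕ) : ∑ m ∈ Finset.Icc 1 N, 1/((m:ℝ)+1) ≤ Real.log N + 1 := by
  have h : ∑ m ∈ Finset.Icc 1 N, 1/((m:ℝ)+1) ≤
      ∑ m ∈ Finset.Icc 1 N, (Real.log (m+1) - Real.log m) := by
    apply Finset.sum_le_sum
    intro m hm
    rw [Finset.mem_Icc] at hm
    exact log_diff_lb13 m hm.1
  rcases Nat.eq_zero_or_pos N with h0 | h0
  · subst h0; simp
  have htel : ∑ m ∈ Finset.Icc 1 N, (Real.log (m+1) - Real.log m)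
      = Real.log (N+1) := by
    have h5 := tele13 (fun n => Real.log n) N
    push_cast at h5
    simpa using h5
  rw [htel] at h
  have hN' : (1:ℝ) ≤ N := by exact_mod_cast h0
  have h1 : Real.log ((N:ℝ)+1) ≤ Real.log N + 1 := by
    have h2 := log_diff_ub13 N h0
    have : (1:ℝ)/N ≤ 1 := by rw [div_le_one (by linarith)]; linarith
    linarith
  linarith

lemma key13 (r : ℕ → ℝ) (A C : ℝ) (hA : 0 ≤ A) (hC : 0 ≤ C)
    (hsum : ∀ N : ℕ, 1 ≤ N →
      |(∑ k ∈ Finset.Icc 1 N, r k) - A * N * Real.log N| ≤ C * N)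
    (N : ℕ) (hN : 1 ≤ N) :
    |(∑ k ∈ Finset.Icc 1 N, r k / k) - A/2 * (Real.log N)^2| ≤
      (5*A + 2*C) * (Real.log N + 1) := by
  have hLnn : 0 ≤ Real.log N := Real.log_nonneg (by exact_mod_cast hN)
  rw [abel13]
  -- main sum error
  have E1 : |(∑ m ∈ Finset.Icc 1 N, (∑ k ∈ Finset.Icc 1 m, r k) * (1/(m:ℝ) - 1/((m:ℝ)+1)))
      - A * ∑ m ∈ Finset.Icc 1 N, Real.log m/((m:ℝ)+1)| ≤ C * (Real.log N + 1) := by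
    rw [Finset.mul_sum, ← Finset.sum_sub_distrib]
    refine (Finset.abs_sum_le_sum_abs _ _).trans ?_
    have hstep : ∀ m ∈ Finset.Icc 1 N,
        |(∑ k ∈ Finset.Icc 1 m, r k) * (1/(m:ℝ) - 1/((m:ℝ)+1)) - A * (Real.log m/((m:ℝ)+1))|
          ≤ C * (1/((m:ℝ)+1)) := by
      intro m hm
      rw [Finset.mem_Icc] at hm
      have hm1 : (1:ℝ) ≤ m := by exact_mod_cast hm.1
      have hmpos : (0:ℝ) < m := by linarith
      have heq : (∑ k ∈ Finset.Icc 1 m, r k) * (1/(m:ℝ) - 1/((m:ℝ)+1)) - A * (Real.log m/((m:ℝ)+1))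
          = ((∑ k ∈ Finset.Icc 1 m, r k) - A * m * Real.log m) * (1/((m:ℝ)*((m:ℝ)+1))) := by
        field_simp
        ring
      rw [heq, abs_mul]
      have h2 := hsum m hm.1
      have h3 : |1/((m:ℝ)*((m:ℝ)+1))| = 1/((m:ℝ)*((m:ℝ)+1)) := abs_of_pos (by positivity)
      rw [h3]
      have h4 : C * (m:ℝ) * (1/((m:ℝ)*((m:ℝ)+1))) = C * (1/((m:ℝ)+1)) := by
        field_simp
      calc |(∑ k ∈ Finset.Icc 1 m, r k) - A * m * Real.log m| * (1/((m:ℝ)*((m:ℝ)+1)))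
          ≤ (C * m) * (1/((m:ℝ)*((m:ℝ)+1))) := by
            apply mul_le_mul_of_nonneg_right h2 (by positivity)
        _ = C * (1/((m:ℝ)+1)) := h4
    refine (Finset.sum_le_sum hstep).trans ?_
    rw [← Finset.mul_sum]
    exact mul_le_mul_of_nonneg_left (harmonic13 N) hC
  -- L1 bound
  obtain ⟨hL1a, hL1b⟩ := L1_13 N hN
  have E2 : |A * (∑ m ∈ Finset.Icc 1 N, Real.log m/((m:ℝ)+1)) - A/2 * (Real.log N)^2| ≤
      A * (4 * Real.log N + 1) := by
    rw [abs_le]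
    constructor
    · nlinarith
    · nlinarith
  -- boundary term
  have E3 : |(∑ k ∈ Finset.Icc 1 N, r k)/((N:ℝ)+1)| ≤ A * Real.log N + C := by
    have h2 := hsum N hN
    have hN1 : (1:ℝ) ≤ N := by exact_mod_cast hN
    have hRa : |∑ k ∈ Finset.Icc 1 N, r k| ≤ A * N * Real.log N + C * N := by
      have := abs_abs_sub_abs_le_abs_sub (∑ k ∈ Finset.Icc 1 N, r k) (A * N * Real.log N)
      have habs : |A * (N:ℝ) * Real.log N| = A * N * Real.log N := abs_of_nonneg (by positivity)
      calc |∑ k ∈ Finset.Icc 1 N, r k| ≤ |A * (N:ℝ) * Real.log N| + |(∑ k ∈ Finset.Icc 1 N, r k) - A * N * Real.log N| := by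
            have := abs_sub_abs_le_abs_sub (∑ k ∈ Finset.Icc 1 N, r k) (A * (N:ℝ) * Real.log N)
            linarith [abs_nonneg ((∑ k ∈ Finset.Icc 1 N, r k) - A * (N:ℝ) * Real.log N)]
        _ ≤ A * N * Real.log N + C * N := by rw [habs]; linarith
    rw [abs_div, abs_of_pos (by positivity : (0:ℝ) < (N:ℝ)+1)]
    rw [div_le_iff₀ (by positivity : (0:ℝ) < (N:ℝ)+1)]
    calc |∑ k ∈ Finset.Icc 1 N, r k| ≤ A * N * Real.log N + C * N := hRa
      _ ≤ (A * Real.log N + C) * ((N:ℝ)+1) := by nlinarith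
  -- combine
  have := abs_add_le ((∑ m ∈ Finset.Icc 1 N, (∑ k ∈ Finset.Icc 1 m, r k) * (1/(m:ℝ) - 1/((m:ℝ)+1)))
      - A/2 * (Real.log N)^2) ((∑ k ∈ Finset.Icc 1 N, r k)/((N:ℝ)+1))
  have tri : |(∑ m ∈ Finset.Icc 1 N, (∑ k ∈ Finset.Icc 1 m, r k) * (1/(m:ℝ) - 1/((m:ℝ)+1)))
      + (∑ k ∈ Finset.Icc 1 N, r k)/((N:ℝ)+1) - A/2 * (Real.log N)^2|
      ≤ |(∑ m ∈ Finset.Icc 1 N, (∑ k ∈ Finset.Icc 1 m, r k) * (1/(m:ℝ) - 1/((m:ℝ)+1)))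
        - A/2 * (Real.log N)^2| + |(∑ k ∈ Finset.Icc 1 N, r k)/((N:ℝ)+1)| := by
    have h := abs_add_le ((∑ m ∈ Finset.Icc 1 N, (∑ k ∈ Finset.Icc 1 m, r k) * (1/(m:ℝ) - 1/((m:ℝ)+1)))
        - A/2 * (Real.log N)^2) ((∑ k ∈ Finset.Icc 1 N, r k)/((N:ℝ)+1))
    exact (congrArg abs (by ring)).trans_le h
  have tri2 : |(∑ m ∈ Finset.Icc 1 N, (∑ k ∈ Finset.Icc 1 m, r k) * (1/(m:ℝ) - 1/((m:ℝ)+1)))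
      - A/2 * (Real.log N)^2| ≤ C * (Real.log N + 1) + A * (4 * Real.log N + 1) := by
    have h := abs_add_le ((∑ m ∈ Finset.Icc 1 N, (∑ k ∈ Finset.Icc 1 m, r k) * (1/(m:ℝ) - 1/((m:ℝ)+1)))
        - A * ∑ m ∈ Finset.Icc 1 N, Real.log m/((m:ℝ)+1))
        (A * (∑ m ∈ Finset.Icc 1 N, Real.log m/((m:ℝ)+1)) - A/2 * (Real.log N)^2)
    have heq : (∑ m ∈ Finset.Icc 1 N, (∑ k ∈ Finset.Icc 1 m, r k) * (1/(m:ℝ) - 1/((m:ℝ)+1)))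
        - A/2 * (Real.log N)^2 =
        ((∑ m ∈ Finset.Icc 1 N, (∑ k ∈ Finset.Icc 1 m, r k) * (1/(m:ℝ) - 1/((m:ℝ)+1)))
        - A * ∑ m ∈ Finset.Icc 1 N, Real.log m/((m:ℝ)+1))
        + (A * (∑ m ∈ Finset.Icc 1 N, Real.log m/((m:ℝ)+1)) - A/2 * (Real.log N)^2) := by ring
    rw [heq]
    exact h.trans (by linarith)
  nlinarith [mul_nonneg hC hLnn, mul_nonneg hA hLnn]
lemma sinsq13 (x : ℝ) (hx : 0 ≤ x) : |Real.sin x ^ 2 - x^2| ≤ x^4 := by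
  rcases le_or_gt x 1 with h1 | h1
  · rcases eq_or_lt_of_le hx with h0 | h0
    · simp [← h0]
    · have hs1 := Real.sin_gt_sub_cube h0
      have hs2 := Real.sin_le hx
      have hx2 : x^2 ≤ 1 := by nlinarith
      have hx3 : x^3 ≤ x := by nlinarith
      have hs0 : 0 ≤ Real.sin x := by nlinarith
      rw [abs_le]
      constructor <;> nlinarith
  · have hs := Real.sin_sq_le_one x
    have hs0 : 0 ≤ Real.sin x ^ 2 := sq_nonneg _
    have hx2 : 1 ≤ x^2 := by nlinarith
    have hx4 : x^2 ≤ x^4 := by nlinarith [mul_le_mul_of_nonneg_left hx2 (sq_nonneg x)]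
    rw [abs_le]
    constructor <;> nlinarith
theorem stmt_13 (r : ℕ → ℝ) (hr : ∀ k, 0 ≤ r k) (A : ℝ) (hA : 0 < A)
    (hsum : ∃ C : ℝ, ∀ N : ℕ, 1 ≤ N →
      |(∑ k ∈ Finset.Icc 1 N, r k) - A * N * Real.log N| ≤ C * N) :
    ∃ C > (0 : ℝ), ∀ᶠ h : ℝ in nhdsWithin 0 (Set.Ioi 0),
      |(∑ k ∈ Finset.Icc 1 ⌊(1 / h : ℝ)⌋₊, r k / (k : ℝ) ^ 3 * Real.sin (π * h * k) ^ 2) -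
          A * π ^ 2 / 2 * h ^ 2 * Real.log (1 / h) ^ 2| ≤
        C * h ^ 2 * Real.log (1 / h) := by
  obtain ⟨C0, hC0⟩ := hsum
  have hC0nn : 0 ≤ C0 := by
    have h1 := hC0 1 le_rfl
    simp at h1
    calc (0:ℝ) ≤ |r 1| := abs_nonneg _
      _ ≤ C0 := by simpa using h1
  set Cf : ℝ := π^4*(A+2*C0) + 3*π^2*(5*A+2*C0) + A*π^2 with hCf
  have hCfpos : 0 < Cf := by positivity
  refine ⟨Cf, hCfpos, ?_⟩
  have hmem : Set.Ioo (0:ℝ) (1/2) ∈ nhdsWithin (0:ℝ) (Set.Ioi 0) :=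
    Ioo_mem_nhdsGT_of_mem (by norm_num : (0:ℝ) ∈ Set.Ico (0:ℝ) (1/2))
  filter_upwards [hmem] with h hh
  obtain ⟨hh0, hh2⟩ := hh
  set N := ⌊(1/h : ℝ)⌋₊ with hNdef
  have hinv2 : (2:ℝ) < 1/h := by
    rw [lt_div_iff₀ hh0]; linarith
  have hinv0 : (0:ℝ) < 1/h := by linarith
  have hN2 : 2 ≤ N := by
    rw [hNdef]
    exact Nat.le_floor (by exact_mod_cast hinv2.le)
  have hN1 : 1 ≤ N := by omega
  have hNle : (N:ℝ) ≤ 1/h := Nat.floor_le hinv0.le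
  have hNgt : 1/h < (N:ℝ) + 1 := Nat.lt_floor_add_one _
  have hNpos : (0:ℝ) < N := by
    have : (1:ℝ) ≤ N := by exact_mod_cast hN1
    linarith
  set L := Real.log (1/h) with hLdef
  set lN := Real.log N with hlNdef
  have hlNnn : 0 ≤ lN := Real.log_nonneg (by exact_mod_cast hN1)
  have hlNle : lN ≤ L := Real.log_le_log hNpos hNle
  have hLpos : 0 < L := by
    rw [hLdef]
    have := Real.log_lt_log (by norm_num : (0:ℝ) < 2) hinv2
    have h2pos : (0:ℝ) < Real.log 2 := Real.log_pos (by norm_num)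
    linarith
  have hLlN : L ≤ lN + 1 := by
    have hle : L ≤ Real.log ((N:ℝ)+1) := Real.log_le_log hinv0 hNgt.le
    have hd := log_diff_ub13 N hN1
    have h1N : (1:ℝ)/N ≤ 1 := by
      rw [div_le_one hNpos]
      have : (1:ℝ) ≤ N := by exact_mod_cast hN1
      linarith
    linarith
  have hone : (1:ℝ) ≤ 2*L := by
    have h2pos : (0:ℝ) < Real.log 2 := Real.log_pos (by norm_num)
    have hl2 : Real.log 2 ≤ L := by
      rw [hLdef]
      exact Real.log_le_log (by norm_num) hinv2.le
    nlinarith [Real.log_two_gt_d9]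
  have hhN : h * N ≤ 1 := by
    have := (le_div_iff₀ hh0).1 hNle
    linarith
  -- abbreviations
  set Q := ∑ k ∈ Finset.Icc 1 N, r k / (k:ℝ) with hQdef
  set S := ∑ k ∈ Finset.Icc 1 N, r k / (k : ℝ) ^ 3 * Real.sin (π * h * k) ^ 2 with hSdef
  set X := ∑ k ∈ Finset.Icc 1 N, r k with hXdef
  have hX0 : 0 ≤ X := Finset.sum_nonneg (fun k _ => hr k)
  have hXle : X ≤ A * N * lN + C0 * N := by
    have h2 := hC0 N hN1
    have := abs_sub_abs_le_abs_sub X (A * (N:ℝ) * lN)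
    have habs : |A * (N:ℝ) * lN| = A * N * lN := abs_of_nonneg (by positivity)
    calc X ≤ |X| := le_abs_self X
      _ ≤ |A * (N:ℝ) * lN| + |X - A * N * lN| := by
          linarith [abs_sub_abs_le_abs_sub X (A * (N:ℝ) * lN), abs_nonneg (X - A * (N:ℝ) * lN)]
      _ ≤ A * N * lN + C0 * N := by rw [habs]; linarith
  -- E1 : sin approximation
  have E1 : |S - π^2*h^2*Q| ≤ h^2 * (π^4*(A*L + C0)) := by
    have hterm : ∀ k ∈ Finset.Icc 1 N,
        |r k / (k:ℝ)^3 * Real.sin (π*h*k)^2 - π^2*h^2*(r k / k)| ≤ π^4*h^4*(k * r k) := by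
      intro k hk
      rw [Finset.mem_Icc] at hk
      have hk1 : (1:ℝ) ≤ k := by exact_mod_cast hk.1
      have hkpos : (0:ℝ) < k := by linarith
      have hxnn : 0 ≤ π*h*k := by positivity
      have hb := sinsq13 (π*h*k) hxnn
      have heq : r k / (k:ℝ)^3 * Real.sin (π*h*k)^2 - π^2*h^2*(r k / k)
          = (r k / (k:ℝ)^3) * (Real.sin (π*h*k)^2 - (π*h*k)^2) := by
        field_simp
      rw [heq, abs_mul]
      have h3 : |r k / (k:ℝ)^3| = r k / (k:ℝ)^3 := abs_of_nonneg (div_nonneg (hr k) (by positivity))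
      rw [h3]
      calc r k / (k:ℝ)^3 * |Real.sin (π*h*k)^2 - (π*h*k)^2|
          ≤ r k / (k:ℝ)^3 * (π*h*k)^4 := by
            apply mul_le_mul_of_nonneg_left hb (div_nonneg (hr k) (by positivity))
        _ = π^4*h^4*(k * r k) := by field_simp
    have hsumdiff : S - π^2*h^2*Q = ∑ k ∈ Finset.Icc 1 N,
        (r k / (k:ℝ)^3 * Real.sin (π*h*k)^2 - π^2*h^2*(r k / k)) := by
      rw [hSdef, hQdef, Finset.mul_sum, ← Finset.sum_sub_distrib]
    rw [hsumdiff]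
    refine (Finset.abs_sum_le_sum_abs _ _).trans ?_
    refine (Finset.sum_le_sum hterm).trans ?_
    have hbound : ∑ k ∈ Finset.Icc 1 N, π^4*h^4*((k:ℝ) * r k)
        ≤ π^4*h^4*((N:ℝ) * X) := by
      rw [← Finset.mul_sum]
      apply mul_le_mul_of_nonneg_left _ (by positivity)
      rw [hXdef, Finset.mul_sum]
      apply Finset.sum_le_sum
      intro k hk
      rw [Finset.mem_Icc] at hk
      have : (k:ℝ) ≤ N := by exact_mod_cast hk.2
      exact mul_le_mul_of_nonneg_right this (hr k)
    refine hbound.trans ?_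
    have s1 : (N:ℝ) * X ≤ N * (A * N * lN + C0 * N) :=
      mul_le_mul_of_nonneg_left hXle hNpos.le
    have s2 : π^4*h^4*((N:ℝ)*X) ≤ π^4*h^4*((N:ℝ)*(A*N*lN + C0*N)) :=
      mul_le_mul_of_nonneg_left s1 (by positivity)
    refine s2.trans ?_
    have s3 : π^4*h^4*((N:ℝ)*(A*N*lN + C0*N)) = (h*N)^2 * (h^2 * (π^4*(A*lN + C0))) := by
      ring
    rw [s3]
    have s4 : (h*N)^2 ≤ 1 := by nlinarith [mul_nonneg hh0.le hNpos.le]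
    have s5 : (h*N)^2 * (h^2 * (π^4*(A*lN + C0))) ≤ 1 * (h^2 * (π^4*(A*lN + C0))) :=
      mul_le_mul_of_nonneg_right s4 (by positivity)
    refine s5.trans ?_
    rw [one_mul]
    exact mul_le_mul_of_nonneg_left (mul_le_mul_of_nonneg_left
      (add_le_add_left (mul_le_mul_of_nonneg_left hlNle hA.le) C0)
      (by positivity : (0:ℝ) ≤ π^4)) (by positivity : (0:ℝ) ≤ h^2)
  -- E2 : key13
  have E2 : |π^2*h^2*Q - π^2*h^2*(A/2*lN^2)| ≤ h^2 * (π^2*(5*A+2*C0)*(lN+1)) := by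
    have hk := key13 r A C0 hA.le hC0nn hC0 N hN1
    have heq : π^2*h^2*Q - π^2*h^2*(A/2*lN^2) = (π^2*h^2) * (Q - A/2*lN^2) := by ring
    rw [heq, abs_mul, abs_of_nonneg (by positivity : (0:ℝ) ≤ π^2*h^2)]
    calc π^2*h^2 * |Q - A/2*lN^2| ≤ π^2*h^2 * ((5*A + 2*C0) * (lN + 1)) :=
          mul_le_mul_of_nonneg_left hk (by positivity)
      _ = h^2 * (π^2*(5*A+2*C0)*(lN+1)) := by ring
  -- E3 : log N vs log (1/h)
  have E3 : |π^2*h^2*(A/2*lN^2) - A * π^2/2 * h^2 * L^2| ≤ h^2 * (A*π^2*L) := by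
    have heq : π^2*h^2*(A/2*lN^2) - A * π^2/2 * h^2 * L^2 = (A*π^2/2*h^2) * (lN^2 - L^2) := by
      ring
    rw [heq, abs_mul, abs_of_nonneg (by positivity : (0:ℝ) ≤ A*π^2/2*h^2)]
    have habs : |lN^2 - L^2| ≤ 2*L := by
      rw [abs_le]
      constructor
      · nlinarith
      · nlinarith
    calc A*π^2/2*h^2 * |lN^2 - L^2| ≤ A*π^2/2*h^2 * (2*L) :=
          mul_le_mul_of_nonneg_left habs (by positivity)
      _ = h^2 * (A*π^2*L) := by ring
  -- combine
  have hBsum : π^4*(A*L + C0) + π^2*(5*A+2*C0)*(lN+1) + A*π^2*L ≤ Cf * L := by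
    have e1 : A*L + C0 ≤ (A+2*C0)*L := by nlinarith
    have e2 : lN + 1 ≤ 3*L := by linarith
    have t1 : π^4*(A*L + C0) ≤ π^4*((A+2*C0)*L) :=
      mul_le_mul_of_nonneg_left e1 (by positivity)
    have t2 : π^2*(5*A+2*C0)*(lN+1) ≤ π^2*(5*A+2*C0)*(3*L) :=
      mul_le_mul_of_nonneg_left e2 (by positivity)
    have : π^4*((A+2*C0)*L) + π^2*(5*A+2*C0)*(3*L) + A*π^2*L = Cf * L := by
      rw [hCf]; ring
    linarith
  have tri : |S - A * π^2/2 * h^2 * L^2| ≤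
      |S - π^2*h^2*Q| + |π^2*h^2*Q - π^2*h^2*(A/2*lN^2)|
        + |π^2*h^2*(A/2*lN^2) - A * π^2/2 * h^2 * L^2| := by
    have := abs_add_le (S - π^2*h^2*Q) (π^2*h^2*Q - π^2*h^2*(A/2*lN^2))
    have h2 := abs_add_le (S - π^2*h^2*(A/2*lN^2)) (π^2*h^2*(A/2*lN^2) - A * π^2/2 * h^2 * L^2)
    have heq1 : S - π^2*h^2*(A/2*lN^2) = (S - π^2*h^2*Q) + (π^2*h^2*Q - π^2*h^2*(A/2*lN^2)) := by
      ring
    have heq2 : S - A * π^2/2 * h^2 * L^2 =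
        (S - π^2*h^2*(A/2*lN^2)) + (π^2*h^2*(A/2*lN^2) - A * π^2/2 * h^2 * L^2) := by ring
    rw [heq2]
    refine h2.trans ?_
    rw [heq1]
    linarith
  have final : |S - A * π^2/2 * h^2 * L^2| ≤ h^2 * (Cf * L) := by
    have hsum3 : h^2 * (π^4*(A*L + C0)) + h^2 * (π^2*(5*A+2*C0)*(lN+1)) + h^2 * (A*π^2*L)
        ≤ h^2 * (Cf * L) := by
      have h9 := mul_le_mul_of_nonneg_left hBsum (sq_nonneg h)
      linarith [h9]
    refine tri.trans ((add_le_add (add_le_add E1 E2) E3).trans hsum3)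
  calc |S - A * π^2/2 * h^2 * L^2| ≤ h^2 * (Cf * L) := final
    _ = Cf * h^2 * L := by ring
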